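/- For every W-logic WL among the fourteen systems, the canonical model for WL is a constructive neighbourhood model for WL; in particular its valuation is hereditary, and it satisfies condition (C) if WL contains C_□ and K_◇, condition (N) if WL contains N_□, condition (D) if WL contains D, condition (P) if WL contains P_◇, and condition (T) if WL contains T_□ and T_◇. -/

import Mathlib

set_option autoImplicit false

/-- Formulas of the propositional modal language:
`A ::= p | ⊥ | A∧A | A∨A | A→A | □A | ◇A`. -/
inductive Formula : Type
  | var : ℕ → Formula
  | bot : Formula
  | and : Formula → Formula → Formula
  | or : Formula → Formula → Formula
  | imp : Formula → Formula → Formula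
  | box : Formula → Formula
  | dia : Formula → Formula
  deriving DecidableEq

/-- `¬A := A → ⊥`. -/
def Formula.neg (A : Formula) : Formula := A.imp Formula.bot

/-- `⊤ := ⊥ → ⊥`. -/
def Formula.top : Formula := Formula.bot.imp Formula.bot

/-- A specification of which additional modal axioms a logic has:
`N` (□⊤ / N-condition), `C` (C_□ together with K_◇ in W-logics),
`P` (P_□ classically / P_◇ in W-logics), `D` (□A→◇A), `T` (T_□, and T_◇ in W-logics). -/
structure LogicSpec where
  hasN : Bool := false
  hasC : Bool := false
  hasP : Bool := false
  hasD : Bool := false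
  hasT : Bool := false

/-- The names of the fourteen systems. -/
inductive LName : Type
  | M | MN | MC | K | MP | MNP | MD | MND | MCD | KD | MT | MNT | MCT | KT

/-- The axiom flags of the fourteen classical modal logics. -/
def cSpec : LName → LogicSpec
  | .M   => {}
  | .MN  => { hasN := true }
  | .MC  => { hasC := true }
  | .K   => { hasN := true, hasC := true }
  | .MP  => { hasP := true }
  | .MNP => { hasN := true, hasP := true }
  | .MD  => { hasD := true }
  | .MND => { hasN := true, hasD := true }
  | .MCD => { hasC := true, hasD := true }
  | .KD  => { hasN := true, hasC := true, hasD := true }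
  | .MT  => { hasT := true }
  | .MNT => { hasN := true, hasT := true }
  | .MCT => { hasC := true, hasT := true }
  | .KT  => { hasN := true, hasC := true, hasT := true }

/-- The axiom flags of the fourteen W-logics (WMD and WMCD include the axiom P_◇ explicitly). -/
def wSpec : LName → LogicSpec
  | .MD  => { hasP := true, hasD := true }
  | .MCD => { hasC := true, hasP := true, hasD := true }
  | n    => cSpec n

/-- Hilbert-style provability in the W-logic determined by the flags `S`:
intuitionistic propositional logic plus dual∧, the monotonicity rules M_□ and M_◇,
and, according to the flags, N_□, C_□ together with K_◇, P_◇, D, T_□ together with T_◇. -/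
inductive WProof (S : LogicSpec) : Formula → Prop
  | ax1 (A B : Formula) : WProof S (A.imp (B.imp A))
  | ax2 (A B C : Formula) : WProof S ((A.imp (B.imp C)).imp ((A.imp B).imp (A.imp C)))
  | andI (A B : Formula) : WProof S (A.imp (B.imp (A.and B)))
  | andE1 (A B : Formula) : WProof S ((A.and B).imp A)
  | andE2 (A B : Formula) : WProof S ((A.and B).imp B)
  | orI1 (A B : Formula) : WProof S (A.imp (A.or B))
  | orI2 (A B : Formula) : WProof S (B.imp (A.or B))
  | orE (A B C : Formula) : WProof S ((A.imp C).imp ((B.imp C).imp ((A.or B).imp C)))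
  | botE (A : Formula) : WProof S (Formula.bot.imp A)
  | mp {A B : Formula} : WProof S (A.imp B) → WProof S A → WProof S B
  | dualAnd (A : Formula) : WProof S (((Formula.box A).and (Formula.dia A.neg)).neg)
  | monBox {A B : Formula} : WProof S (A.imp B) → WProof S ((Formula.box A).imp (Formula.box B))
  | monDia {A B : Formula} : WProof S (A.imp B) → WProof S ((Formula.dia A).imp (Formula.dia B))
  | nBox : S.hasN = true → WProof S (Formula.box Formula.top)
  | cBox (A B : Formula) : S.hasC = true →
      WProof S (((Formula.box A).and (Formula.box B)).imp (Formula.box (A.and B)))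
  | kDia (A B : Formula) : S.hasC = true →
      WProof S ((Formula.box (A.imp B)).imp ((Formula.dia A).imp (Formula.dia B)))
  | pDia : S.hasP = true → WProof S (Formula.dia Formula.top)
  | dAx (A : Formula) : S.hasD = true → WProof S ((Formula.box A).imp (Formula.dia A))
  | tBox (A : Formula) : S.hasT = true → WProof S ((Formula.box A).imp A)
  | tDia (A : Formula) : S.hasT = true → WProof S (A.imp (Formula.dia A))

/-- Conjunction of a list of formulas (empty conjunction is ⊤). -/
def conjList : List Formula → Formula
  | [] => Formula.top
  | [A] => A
  | A :: B :: l => A.and (conjList (B :: l))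

/-- Disjunction of a list of formulas (empty disjunction is ⊥). -/
def disjList : List Formula → Formula
  | [] => Formula.bot
  | [A] => A
  | A :: B :: l => A.or (disjList (B :: l))

/-- `⋀Γ` for a finite multiset `Γ` (empty `Γ` is read as ⊤). -/
noncomputable def conjM (Γ : Multiset Formula) : Formula := conjList Γ.toList

/-- `⋁Δ` for a finite multiset `Δ` (empty `Δ` is read as ⊥). -/
noncomputable def disjM (Δ : Multiset Formula) : Formula := disjList Δ.toList

/-- `A` is deducible in the W-logic `S` from the set of formulas `Sg`:
there is a finite subset `{B₁,…,Bₙ} ⊆ Sg` with `⊢ B₁∧…∧Bₙ → A`. -/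
def Deduces (S : LogicSpec) (Sg : Set Formula) (A : Formula) : Prop :=
  ∃ L : List Formula, (∀ B ∈ L, B ∈ Sg) ∧ WProof S ((conjList L).imp A)

/-- A WL-prime set: consistent, closed under deduction, and with the disjunction property. -/
structure IsPrime (S : LogicSpec) (Sg : Set Formula) : Prop where
  consistent : ¬ Deduces S Sg Formula.bot
  closed : ∀ A : Formula, Deduces S Sg A → A ∈ Sg
  disj : ∀ A B : Formula, (A.or B) ∈ Sg → A ∈ Sg ∨ B ∈ Sg

/-- A WL-segment `(Sg, C)`: `Sg` is WL-prime and `C` is a class of sets of WL-prime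
sets satisfying the box and diamond conditions, together with the extra conditions
for logics containing C_□ & K_◇, D, or T_□ & T_◇. -/
structure IsSegment (S : LogicSpec) (Sg : Set Formula) (C : Set (Set (Set Formula))) : Prop where
  prime : IsPrime S Sg
  allPrime : ∀ U ∈ C, ∀ Pr ∈ U, IsPrime S Pr
  boxCond : ∀ A : Formula, Formula.box A ∈ Sg → ∃ U ∈ C, ∀ Pr ∈ U, A ∈ Pr
  diaCond : ∀ A : Formula, Formula.dia A ∈ Sg → ∀ U ∈ C, ∃ Pr ∈ U, A ∈ Pr
  cCond : S.hasC = true → ∀ U ∈ C, ∀ U' ∈ C, U ∩ U' ∈ C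
  dCond : S.hasD = true → ∀ U ∈ C, ∀ U' ∈ C, (U ∩ U').Nonempty
  tCond : S.hasT = true → ∀ U ∈ C, Sg ∈ U

/-- A constructive neighbourhood model (CNM): a preorder `le` of intuitionistic
accessibility, a neighbourhood function `N`, and a hereditary valuation `V`. -/
structure CNM (W : Type) where
  le : W → W → Prop
  le_refl : ∀ w, le w w
  le_trans : ∀ u v w, le u v → le v w → le u w
  N : W → Set (Set W)
  V : ℕ → Set W
  hered : ∀ (p : ℕ) (u v : W), le u v → u ∈ V p → v ∈ V p

/-- Forcing in a constructive neighbourhood model: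
`w ⊩ B→C` iff for all `v ≥ w`, `v ⊩ B` implies `v ⊩ C`;
`w ⊩ □B` iff for all `v ≥ w` there is `α ∈ N(v)` with `u ⊩ B` for all `u ∈ α`;
`w ⊩ ◇B` iff for all `v ≥ w` and all `α ∈ N(v)` there is `u ∈ α` with `u ⊩ B`. -/
def CNM.force {W : Type} (M : CNM W) : Formula → W → Prop
  | Formula.var p, w => w ∈ M.V p
  | Formula.bot, _ => False
  | Formula.and A B, w => M.force A w ∧ M.force B w
  | Formula.or A B, w => M.force A w ∨ M.force B w
  | Formula.imp A B, w => ∀ v, M.le w v → M.force A v → M.force B v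
  | Formula.box A, w => ∀ v, M.le w v → ∃ α ∈ M.N v, ∀ u ∈ α, M.force A u
  | Formula.dia A, w => ∀ v, M.le w v → ∀ α ∈ M.N v, ∃ u ∈ α, M.force A u

/-- `M` is a constructive neighbourhood model for the W-logic with flags `S`: it
satisfies the condition (C), (N), (T), (D), (P) corresponding to each modal axiom
of the logic among C_□ (with K_◇), N_□, T_□ (with T_◇), D, P_◇. -/
def CNM.forLogic {W : Type} (S : LogicSpec) (M : CNM W) : Prop :=
  (S.hasC = true → ∀ w, ∀ α ∈ M.N w, ∀ β ∈ M.N w, α ∩ β ∈ M.N w) ∧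
  (S.hasN = true → ∀ w, M.N w ≠ ∅) ∧
  (S.hasT = true → ∀ w, ∀ α ∈ M.N w, w ∈ α) ∧
  (S.hasD = true → ∀ w, ∀ α ∈ M.N w, ∀ β ∈ M.N w, (α ∩ β).Nonempty) ∧
  (S.hasP = true → ∀ w, ∅ ∉ M.N w)

/-- The worlds of the canonical model for the W-logic `S`: the WL-segments. -/
def Seg (S : LogicSpec) : Type :=
  { x : Set Formula × Set (Set (Set Formula)) // IsSegment S x.1 x.2 }

/-- The canonical model for the W-logic `S`: worlds are WL-segments,
`(Σ,C) ≤ (Σ',C')` iff `Σ ⊆ Σ'`, the neighbourhoods of `(Σ,C)` are the sets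
`α_U = {(Σ',C') : Σ' ∈ U}` for `U ∈ C`, and `(Σ,C) ∈ V(p)` iff `p ∈ Σ`. -/
def canonical (S : LogicSpec) : CNM (Seg S) where
  le x y := x.1.1 ⊆ y.1.1
  le_refl _ := subset_rfl
  le_trans _ _ _ h1 h2 := fun _ ha => h2 (h1 ha)
  N x := { α | ∃ U ∈ x.1.2, α = { y : Seg S | y.1.1 ∈ U } }
  V p := { x : Seg S | Formula.var p ∈ x.1.1 }
  hered _ _ _ hle h := hle h

/- ### Auxiliary lemmas for statement17 -/

section Aux

variable {S : LogicSpec}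

lemma imp_refl' (A : Formula) : WProof S (A.imp A) :=
  WProof.mp (WProof.mp (WProof.ax2 A (A.imp A) A) (WProof.ax1 A (A.imp A))) (WProof.ax1 A A)

lemma imp_trans' {A B C : Formula} (h1 : WProof S (A.imp B)) (h2 : WProof S (B.imp C)) :
    WProof S (A.imp C) :=
  WProof.mp (WProof.mp (WProof.ax2 A B C) (WProof.mp (WProof.ax1 (B.imp C) A) h2)) h1

lemma top_proof : WProof S Formula.top := imp_refl' Formula.bot

lemma imp_top' (A : Formula) : WProof S (A.imp Formula.top) :=
  WProof.mp (WProof.ax1 Formula.top A) top_proof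

lemma imp_swap' {A B C : Formula} (h : WProof S (A.imp (B.imp C))) :
    WProof S (B.imp (A.imp C)) :=
  imp_trans' (WProof.ax1 B A) (WProof.mp (WProof.ax2 A B C) h)

lemma curry' {A B C : Formula} (h : WProof S ((A.and B).imp C)) :
    WProof S (A.imp (B.imp C)) :=
  imp_trans' (WProof.andI A B)
    (WProof.mp (WProof.ax2 B (A.and B) C) (WProof.mp (WProof.ax1 ((A.and B).imp C) B) h))

lemma uncurry' {A B C : Formula} (h : WProof S (A.imp (B.imp C))) :
    WProof S ((A.and B).imp C) :=
  WProof.mp (WProof.mp (WProof.ax2 (A.and B) B C) (imp_trans' (WProof.andE1 A B) h))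
    (WProof.andE2 A B)

lemma andI'' {A B C : Formula} (h1 : WProof S (C.imp A)) (h2 : WProof S (C.imp B)) :
    WProof S (C.imp (A.and B)) :=
  WProof.mp (WProof.mp (WProof.ax2 C B (A.and B)) (imp_trans' h1 (WProof.andI A B))) h2

lemma conj_cons1 (A : Formula) (L : List Formula) : WProof S ((conjList (A :: L)).imp A) := by
  cases L with
  | nil => exact imp_refl' A
  | cons B l => exact WProof.andE1 _ _

lemma conj_cons2 (A : Formula) (L : List Formula) :
    WProof S ((conjList (A :: L)).imp (conjList L)) := by
  cases L with
  | nil => exact imp_top' A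
  | cons B l => exact WProof.andE2 _ _

lemma conj_cons_intro {C A : Formula} {L : List Formula} (h1 : WProof S (C.imp A))
    (h2 : WProof S (C.imp (conjList L))) : WProof S (C.imp (conjList (A :: L))) := by
  cases L with
  | nil => exact h1
  | cons B l => exact andI'' h1 h2

lemma mem_conj {B : Formula} {L : List Formula} (h : B ∈ L) :
    WProof S ((conjList L).imp B) := by
  induction L with
  | nil => cases h
  | cons A l ih =>
    rcases List.mem_cons.1 h with rfl | h
    · exact conj_cons1 _ _
    · exact imp_trans' (conj_cons2 A l) (ih h)

lemma conj_imp_conj {L1 L2 : List Formula} (h : ∀ B ∈ L2, B ∈ L1) :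
    WProof S ((conjList L1).imp (conjList L2)) := by
  induction L2 with
  | nil => exact imp_top' _
  | cons A l ih =>
    exact conj_cons_intro (mem_conj (h A List.mem_cons_self))
      (ih fun B hB => h B (List.mem_cons_of_mem _ hB))

lemma conj_append1 (L1 L2 : List Formula) :
    WProof S ((conjList (L1 ++ L2)).imp (conjList L1)) :=
  conj_imp_conj fun B hB => List.mem_append_left _ hB

lemma conj_append2 (L1 L2 : List Formula) :
    WProof S ((conjList (L1 ++ L2)).imp (conjList L2)) :=
  conj_imp_conj fun B hB => List.mem_append_right _ hB

lemma deduces_of_mem {Γ : Set Formula} {A : Formula} (h : A ∈ Γ) : Deduces S Γ A :=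
  ⟨[A], by simpa using h, imp_refl' A⟩

lemma deduces_thm {Γ : Set Formula} {A : Formula} (h : WProof S A) : Deduces S Γ A :=
  ⟨[], by simp, WProof.mp (WProof.ax1 A Formula.top) h⟩

lemma deduces_mp_thm {Γ : Set Formula} {A B : Formula} (h : WProof S (A.imp B))
    (hA : Deduces S Γ A) : Deduces S Γ B := by
  obtain ⟨L, hL, hp⟩ := hA
  exact ⟨L, hL, imp_trans' hp h⟩

lemma deduces_and {Γ : Set Formula} {A B : Formula} (hA : Deduces S Γ A)
    (hB : Deduces S Γ B) : Deduces S Γ (A.and B) := by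
  obtain ⟨L1, hL1, hp1⟩ := hA
  obtain ⟨L2, hL2, hp2⟩ := hB
  refine ⟨L1 ++ L2, fun B hB => ?_, ?_⟩
  · rcases List.mem_append.1 hB with h | h
    · exact hL1 _ h
    · exact hL2 _ h
  · exact andI'' (imp_trans' (conj_append1 L1 L2) hp1) (imp_trans' (conj_append2 L1 L2) hp2)

lemma deduces_mp {Γ : Set Formula} {A B : Formula} (h1 : Deduces S Γ (A.imp B))
    (h2 : Deduces S Γ A) : Deduces S Γ B :=
  deduces_mp_thm (uncurry' (imp_refl' (A.imp B))) (deduces_and h1 h2)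

lemma abstract' {A B : Formula} {L : List Formula}
    (h : WProof S ((conjList (A :: L)).imp B)) :
    WProof S ((conjList L).imp (A.imp B)) := by
  cases L with
  | nil => exact WProof.mp (WProof.ax1 (A.imp B) Formula.top) h
  | cons C l => exact imp_swap' (curry' h)

lemma deduction' {Γ : Set Formula} {A B : Formula} (h : Deduces S (insert A Γ) B) :
    Deduces S Γ (A.imp B) := by
  obtain ⟨L, hL, hp⟩ := h
  refine ⟨L.filter (· ≠ A), fun C hC => ?_, ?_⟩
  · obtain ⟨h1, h2⟩ := List.mem_filter.1 hC
    rcases hL C h1 with h | h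
    · exact absurd h (by simpa using h2)
    · exact h
  · refine abstract' (imp_trans' (conj_imp_conj fun C hC => ?_) hp)
    by_cases hCA : C = A
    · simp [hCA]
    · exact List.mem_cons_of_mem _ (List.mem_filter.2 ⟨hC, by simpa using hCA⟩)

lemma deduces_cut {Γ : Set Formula} {A B : Formula} (hA : Deduces S Γ A)
    (h : Deduces S (insert A Γ) B) : Deduces S Γ B :=
  deduces_mp (deduction' h) hA

lemma list_in_chain {c : Set (Set Formula)} (hc : IsChain (· ⊆ ·) c) (hne : c.Nonempty)
    (L : List Formula) (hL : ∀ B ∈ L, B ∈ ⋃₀ c) : ∃ Δ ∈ c, ∀ B ∈ L, B ∈ Δ := by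
  induction L with
  | nil => exact ⟨hne.choose, hne.choose_spec, by simp⟩
  | cons A l ih =>
    obtain ⟨Δ, hΔ, hl⟩ := ih fun B hB => hL B (List.mem_cons_of_mem _ hB)
    obtain ⟨Δ', hΔ', hA⟩ := hL A List.mem_cons_self
    rcases hc.total hΔ hΔ' with h | h
    · refine ⟨Δ', hΔ', fun B hB => ?_⟩
      rcases List.mem_cons.1 hB with rfl | hB
      · exact hA
      · exact h (hl B hB)
    · refine ⟨Δ, hΔ, fun B hB => ?_⟩
      rcases List.mem_cons.1 hB with rfl | hB
      · exact h hA
      · exact hl B hB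

lemma lindenbaum {Γ : Set Formula} (h : ¬ Deduces S Γ Formula.bot) :
    ∃ Pi0 : Set Formula, IsPrime S Pi0 ∧ Γ ⊆ Pi0 := by
  obtain ⟨m, hΓm, hmax⟩ := zorn_subset_nonempty {Δ | ¬ Deduces S Δ Formula.bot}
    (fun c hc hchain hne => by
      refine ⟨⋃₀ c, fun hd => ?_, fun s hs => Set.subset_sUnion_of_mem hs⟩
      obtain ⟨L, hL, hp⟩ := hd
      obtain ⟨Δ, hΔ, hLΔ⟩ := list_in_chain hchain hne L hL
      exact hc hΔ ⟨L, hLΔ, hp⟩) Γ h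
  have hcons : ¬ Deduces S m Formula.bot := hmax.1
  have key : ∀ A : Formula, A ∉ m → Deduces S (insert A m) Formula.bot := by
    intro A hA
    by_contra hcon
    exact hA (hmax.2 hcon (Set.subset_insert A m) (Set.mem_insert A m))
  refine ⟨m, ⟨hcons, ?_, ?_⟩, hΓm⟩
  · intro A hA
    by_contra hAm
    exact hcons (deduces_cut hA (key A hAm))
  · intro A B hAB
    by_contra hor
    push_neg at hor
    have d1 : Deduces S m (A.imp Formula.bot) := deduction' (key A hor.1)
    have d2 : Deduces S m (B.imp Formula.bot) := deduction' (key B hor.2)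
    exact hcons (deduces_mp (deduces_mp (deduces_mp
      (deduces_thm (WProof.orE A B Formula.bot)) d1) d2) (deduces_of_mem hAB))

lemma box_dia_incon {Pi0 : Set Formula} (hPp : IsPrime S Pi0) {A : Formula}
    (h1 : Formula.box A ∈ Pi0) (h2 : Formula.dia A.neg ∈ Pi0) : False :=
  hPp.consistent (deduces_mp_thm (WProof.dualAnd A)
    (deduces_and (deduces_of_mem h1) (deduces_of_mem h2)))

lemma pair_prime {A B : Formula} (h : ¬ WProof S ((A.and B).imp Formula.bot)) :
    ∃ Pi0 : Set Formula, IsPrime S Pi0 ∧ A ∈ Pi0 ∧ B ∈ Pi0 := by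
  have hcon : ¬ Deduces S {A, B} Formula.bot := by
    rintro ⟨L, hL, hp⟩
    refine h (imp_trans' (conj_imp_conj (L1 := [A, B]) fun C hC => ?_) hp)
    have hmem := hL C hC
    simp only [Set.mem_insert_iff, Set.mem_singleton_iff] at hmem
    rcases hmem with rfl | rfl <;> simp
  obtain ⟨Pi0, hPp, hsub⟩ := lindenbaum hcon
  exact ⟨Pi0, hPp, hsub (by simp), hsub (by simp)⟩

/-- Every prime set extends to a segment, for logics without T. -/
lemma extendSeg (hT : S.hasT = false) {Pi0 : Set Formula} (hPp : IsPrime S Pi0) :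
    ∃ C : Set (Set (Set Formula)), IsSegment S Pi0 C := by
  refine ⟨{U | ∃ A : Formula, Formula.box A ∈ Pi0 ∧
    U = {Pp' : Set Formula | IsPrime S Pp' ∧ A ∈ Pp'}}, ?_, ?_, ?_, ?_, ?_, ?_, ?_⟩
  · exact hPp
  · rintro U ⟨A, hA, rfl⟩ Pr hPr
    exact hPr.1
  · intro A hA
    exact ⟨_, ⟨A, hA, rfl⟩, fun Pr hPr => hPr.2⟩
  · rintro B hB U ⟨A, hA, rfl⟩
    have hcon : ¬ WProof S ((A.and B).imp Formula.bot) := by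
      intro p
      have q : WProof S (B.imp (Formula.neg A)) := imp_swap' (curry' p)
      have : Formula.dia (Formula.neg A) ∈ Pi0 :=
        hPp.closed _ (deduces_mp_thm (WProof.monDia q) (deduces_of_mem hB))
      exact box_dia_incon hPp hA this
    obtain ⟨Pp', hPp', hAPp', hBPp'⟩ := pair_prime hcon
    exact ⟨Pp', ⟨hPp', hAPp'⟩, hBPp'⟩
  · rintro hC U ⟨A, hA, rfl⟩ U' ⟨B, hB, rfl⟩
    refine ⟨A.and B, ?_, ?_⟩
    · exact hPp.closed _ (deduces_mp_thm (WProof.cBox A B hC)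
        (deduces_and (deduces_of_mem hA) (deduces_of_mem hB)))
    · ext Pp'
      show (IsPrime S Pp' ∧ A ∈ Pp') ∧ (IsPrime S Pp' ∧ B ∈ Pp') ↔
        (IsPrime S Pp' ∧ (A.and B) ∈ Pp')
      constructor
      · rintro ⟨⟨hp, hA'⟩, ⟨_, hB'⟩⟩
        exact ⟨hp, hp.closed _ (deduces_and (deduces_of_mem hA') (deduces_of_mem hB'))⟩
      · rintro ⟨hp, hmem⟩
        exact ⟨⟨hp, hp.closed _ (deduces_mp_thm (WProof.andE1 A B) (deduces_of_mem hmem))⟩,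
          ⟨hp, hp.closed _ (deduces_mp_thm (WProof.andE2 A B) (deduces_of_mem hmem))⟩⟩
  · rintro hD U ⟨A, hA, rfl⟩ U' ⟨B, hB, rfl⟩
    have hcon : ¬ WProof S ((A.and B).imp Formula.bot) := by
      intro p
      have q : WProof S (A.imp (Formula.neg B)) := curry' p
      have : Formula.dia (Formula.neg B) ∈ Pi0 :=
        hPp.closed _ (deduces_mp_thm (imp_trans' (WProof.monBox q) (WProof.dAx _ hD))
          (deduces_of_mem hA))
      exact box_dia_incon hPp hB this
    obtain ⟨Pp', hPp', hAPp', hBPp'⟩ := pair_prime hcon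
    exact ⟨Pp', ⟨hPp', hAPp'⟩, ⟨hPp', hBPp'⟩⟩
  · intro h
    rw [hT] at h
    exact absurd h (by simp)

lemma statement17_main {S : LogicSpec} (hPT : S.hasP = true → S.hasT = false)
    (hDT : S.hasD = true → S.hasT = false) :
    (∀ (p : ℕ) (u v : Seg S), (canonical S).le u v →
        u ∈ (canonical S).V p → v ∈ (canonical S).V p) ∧
    (canonical S).forLogic S := by
  refine ⟨fun p u v hle h => hle h, ?_, ?_, ?_, ?_, ?_⟩
  · rintro hC w α ⟨U, hU, rfl⟩ β ⟨U', hU', rfl⟩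
    refine ⟨U ∩ U', w.2.cCond hC U hU U' hU', ?_⟩
    ext y
    simp [Set.mem_inter_iff, Set.mem_setOf_eq]
  · intro hN w
    have hbox : Formula.box Formula.top ∈ w.1.1 :=
      w.2.prime.closed _ (deduces_thm (WProof.nBox hN))
    obtain ⟨U, hU, -⟩ := w.2.boxCond _ hbox
    exact Set.Nonempty.ne_empty ⟨_, U, hU, rfl⟩
  · rintro hT w α ⟨U, hU, rfl⟩
    exact w.2.tCond hT U hU
  · rintro hD w α ⟨U, hU, rfl⟩ β ⟨U', hU', rfl⟩
    obtain ⟨Pi0, hPpU, hPpU'⟩ := w.2.dCond hD U hU U' hU'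
    have hprime := w.2.allPrime U hU Pi0 hPpU
    obtain ⟨C'', hseg⟩ := extendSeg (hDT hD) hprime
    exact ⟨⟨(Pi0, C''), hseg⟩, hPpU, hPpU'⟩
  · rintro hP w ⟨U, hU, heq⟩
    have hdia : Formula.dia Formula.top ∈ w.1.1 :=
      w.2.prime.closed _ (deduces_thm (WProof.pDia hP))
    obtain ⟨Pi0, hPpU, -⟩ := w.2.diaCond _ hdia U hU
    have hprime := w.2.allPrime U hU Pi0 hPpU
    obtain ⟨C'', hseg⟩ := extendSeg (hPT hP) hprime
    have : (⟨(Pi0, C''), hseg⟩ : Seg S) ∈ (∅ : Set (Seg S)) := by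
      rw [heq]; exact hPpU
    exact this

end Aux

/-- the canonical model for each of the fourteen W-logics is a
constructive neighbourhood model for that logic: its valuation is hereditary and it
satisfies (C) if the logic contains C_□ & K_◇, (N) if it contains N_□, (D) if it
contains D, (P) if it contains P_◇, and (T) if it contains T_□ & T_◇. -/
theorem statement17 (L : LName) :
    (∀ (p : ℕ) (u v : Seg (wSpec L)), (canonical (wSpec L)).le u v →
        u ∈ (canonical (wSpec L)).V p → v ∈ (canonical (wSpec L)).V p) ∧
    (canonical (wSpec L)).forLogic (wSpec L) := by
  exact statement17_main (by cases L <;> simp [wSpec, cSpec]) (by cases L <;> simp [wSpec, cSpec])
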